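/- Right-uniform two-inequality semi-unification many-one reduces to left-uniform two-inequality semi-unification: given terms σ0, σ1, τ, setting σ' = σ0 → σ1, τ0' = τ → α1, τ1' = α0 → τ for fresh variables α0, α1 not occurring in σ0, σ1, τ, there exist substitutions φ, ψ0, ψ1 with ψ0(φ(σ0)) = φ(τ) and ψ1(φ(σ1)) = φ(τ) if and only if there exist substitutions φ', ψ0', ψ1' with ψ0'(φ'(σ')) = φ'(τ0') and ψ1'(φ'(σ')) = φ'(τ1'). -/
import Mathlib


inductive Tm
  | var : ℕ → Tm
  | arr : Tm → Tm → Tm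

def subst (f : ℕ → Tm) : Tm → Tm
  | .var x => f x
  | .arr s t => .arr (subst f s) (subst f t)

def Tm.size : Tm → ℕ
  | .var _ => 1
  | .arr s t => 1 + s.size + t.size

def occurs (x : ℕ) : Tm → Prop
  | .var y => x = y
  | .arr s t => occurs x s ∨ occurs x t


lemma subst_congr (f g : ℕ → Tm) (t : Tm) (h : ∀ x, occurs x t → f x = g x) :
    subst f t = subst g t := by
  induction t with
  | var x => exact h x rfl
  | arr s t ihs iht =>
      simp only [subst]
      rw [ihs fun x hx => h x (Or.inl hx), iht fun x hx => h x (Or.inr hx)]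

theorem ru2_to_lu2 (σ₀ σ₁ τ : Tm) (α₀ α₁ : ℕ) (hne : α₀ ≠ α₁)
    (h00 : ¬ occurs α₀ σ₀) (h01 : ¬ occurs α₀ σ₁) (h0t : ¬ occurs α₀ τ)
    (h10 : ¬ occurs α₁ σ₀) (h11 : ¬ occurs α₁ σ₁) (h1t : ¬ occurs α₁ τ) :
    (∃ φ ψ₀ ψ₁ : ℕ → Tm,
        subst ψ₀ (subst φ σ₀) = subst φ τ ∧
        subst ψ₁ (subst φ σ₁) = subst φ τ) ↔
    (∃ φ' ψ₀' ψ₁' : ℕ → Tm,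
        subst ψ₀' (subst φ' (.arr σ₀ σ₁)) = subst φ' (.arr τ (.var α₁)) ∧
        subst ψ₁' (subst φ' (.arr σ₀ σ₁)) = subst φ' (.arr (.var α₀) τ)) := by
  constructor
  · rintro ⟨φ, ψ₀, ψ₁, e0, e1⟩
    refine ⟨fun x => if x = α₀ then subst ψ₁ (subst φ σ₀)
              else if x = α₁ then subst ψ₀ (subst φ σ₁) else φ x, ψ₀, ψ₁, ?_, ?_⟩ <;>
    · simp only [subst]
      rw [subst_congr _ φ σ₀ (fun x hx => by
            rw [if_neg (fun h => h00 (by subst h; exact hx)), if_neg (fun h => h10 (by subst h; exact hx))]),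
          subst_congr _ φ σ₁ (fun x hx => by
            rw [if_neg (fun h => h01 (by subst h; exact hx)), if_neg (fun h => h11 (by subst h; exact hx))]),
          subst_congr _ φ τ (fun x hx => by
            rw [if_neg (fun h => h0t (by subst h; exact hx)), if_neg (fun h => h1t (by subst h; exact hx))])]
      simp [hne, hne.symm, e0, e1]
  · rintro ⟨φ', ψ₀', ψ₁', e0, e1⟩
    simp only [subst, Tm.arr.injEq] at e0 e1
    exact ⟨φ', ψ₀', ψ₁', e0.1, e1.2⟩
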